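/- Let P be a probability distribution on a finite set S of cardinality S, let Y_1, …, Y_n be i.i.d. samples from P, and let P̂(y) = (1/n)·#{i : Y_i = y} be the empirical distribution. Then for any δ ∈ (0,1), with probability at least 1 − δ, ‖P̂ − P‖₁ = Σ_{y∈S} |P̂(y) − P(y)| ≤ √( 2·S·ln(2/δ) / n ). -/

import Mathlib

open scoped Classical

section Weissman

open Real Finset


lemma bern_pos {q : ℝ} (hq0 : 0 ≤ q) (hq1 : q ≤ 1) (t : ℝ) :
    0 < 1 - q + q * Real.exp t := by
  rcases lt_or_eq_of_le hq1 with h | h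
  · have := mul_nonneg hq0 (Real.exp_pos t).le
    linarith
  · subst h; simpa using Real.exp_pos t

lemma hoeffding_bernoulli_nonneg {q : ℝ} (hq0 : 0 ≤ q) (hq1 : q ≤ 1) {l : ℝ} (hl : 0 ≤ l) :
    Real.log (1 - q + q * Real.exp l) ≤ q * l + l ^ 2 / 8 := by
  set D : ℝ → ℝ := fun t => 1 - q + q * Real.exp t with hDdef
  have hD : ∀ t, 0 < D t := fun t => bern_pos hq0 hq1 t
  set g1 : ℝ → ℝ := fun t => q + t / 4 - q * Real.exp t / D t with hg1def
  -- g1 is monotone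
  have hDderiv : ∀ t, HasDerivAt D (q * Real.exp t) t := by
    intro t
    have := ((Real.hasDerivAt_exp t).const_mul q).const_add (1 - q)
    exact this
  have hg1deriv : ∀ t : ℝ, HasDerivAt g1
      (1 / 4 - (q * Real.exp t * D t - q * Real.exp t * (q * Real.exp t)) / (D t) ^ 2) t := by
    intro t
    have h1 : HasDerivAt (fun t : ℝ => q * Real.exp t / D t)
        ((q * Real.exp t * D t - q * Real.exp t * (q * Real.exp t)) / (D t) ^ 2) t :=
      ((Real.hasDerivAt_exp t).const_mul q).div (hDderiv t) (hD t).ne'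
    have h2 : HasDerivAt (fun t : ℝ => q + t / 4) (1 / 4) t := by
      simpa using ((hasDerivAt_id t).div_const 4).const_add q
    exact h2.sub h1
  have hg1mono : Monotone g1 := by
    apply monotone_of_hasDerivAt_nonneg hg1deriv
    intro t
    have hDt := hD t
    have hnum : q * Real.exp t * D t - q * Real.exp t * (q * Real.exp t)
        = q * Real.exp t * (1 - q) := by simp only [hDdef]; ring
    have h4 : q * Real.exp t * (1 - q) / (D t) ^ 2 ≤ 1 / 4 := by
      rw [div_le_iff₀ (by positivity)]
      nlinarith [sq_nonneg (1 - q - q * Real.exp t), Real.exp_pos t]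
    simp only [Pi.zero_apply]
    rw [hnum]
    linarith
  have hg10 : g1 0 = 0 := by
    simp only [hg1def, hDdef]
    norm_num
  -- G
  set G : ℝ → ℝ := fun t => q * t + t ^ 2 / 8 - Real.log (D t) with hGdef
  have hGderiv : ∀ t : ℝ, HasDerivAt G (g1 t) t := by
    intro t
    have h1 : HasDerivAt (fun t : ℝ => Real.log (D t)) (q * Real.exp t / D t) t :=
      (hDderiv t).log (hD t).ne'
    have h2 : HasDerivAt (fun t : ℝ => q * t + t ^ 2 / 8) (q + t / 4) t := by
      have ha : HasDerivAt (fun t : ℝ => q * t) q t := by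
        simpa using (hasDerivAt_id t).const_mul q
      have hb : HasDerivAt (fun t : ℝ => t ^ 2 / 8) (t / 4) t := by
        have := (hasDerivAt_pow 2 t).div_const 8
        refine this.congr_deriv ?_
        push_cast; ring
      exact ha.add hb
    exact h2.sub h1
  have hGmono : MonotoneOn G (Set.Ici 0) := by
    apply monotoneOn_of_hasDerivWithinAt_nonneg (convex_Ici 0)
      (fun t _ => (hGderiv t).continuousAt.continuousWithinAt)
      (fun t ht => (hGderiv t).hasDerivWithinAt)
    intro t ht
    rw [interior_Ici] at ht
    have : g1 0 ≤ g1 t := hg1mono (le_of_lt ht)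
    rw [hg10] at this; exact this
  have hG0 : G 0 = 0 := by simp [hGdef, hDdef]
  have := hGmono (Set.self_mem_Ici) (Set.mem_Ici.mpr hl) hl
  rw [hG0] at this
  simp only [hGdef] at this
  linarith

lemma hoeffding_bernoulli {q : ℝ} (hq0 : 0 ≤ q) (hq1 : q ≤ 1) (l : ℝ) :
    1 - q + q * Real.exp l ≤ Real.exp (q * l + l ^ 2 / 8) := by
  rcases le_or_gt 0 l with hl | hl
  · have := hoeffding_bernoulli_nonneg hq0 hq1 hl
    calc 1 - q + q * Real.exp l
        = Real.exp (Real.log (1 - q + q * Real.exp l)) :=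
          (Real.exp_log (bern_pos hq0 hq1 l)).symm
      _ ≤ _ := Real.exp_le_exp.mpr this
  · -- reduce to the nonneg case with q ↦ 1 - q, l ↦ -l
    have h := hoeffding_bernoulli_nonneg (q := 1 - q) (by linarith) (by linarith)
      (l := -l) (by linarith)
    have hpos := bern_pos (q := 1 - q) (by linarith) (by linarith) (-l)
    have key : 1 - (1 - q) + (1 - q) * Real.exp (-l) ≤ Real.exp ((1 - q) * (-l) + (-l) ^ 2 / 8) := by
      calc 1 - (1 - q) + (1 - q) * Real.exp (-l)
          = Real.exp (Real.log (1 - (1 - q) + (1 - q) * Real.exp (-l))) :=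
            (Real.exp_log (by simpa using hpos)).symm
        _ ≤ _ := Real.exp_le_exp.mpr (by simpa using h)
    have := mul_le_mul_of_nonneg_left key (Real.exp_pos l).le
    calc 1 - q + q * Real.exp l
        = Real.exp l * (1 - (1 - q) + (1 - q) * Real.exp (-l)) := by
          have : Real.exp l * Real.exp (-l) = 1 := by
            rw [← Real.exp_add]; simp
          nlinarith [this]
      _ ≤ Real.exp l * Real.exp ((1 - q) * (-l) + (-l) ^ 2 / 8) := this
      _ = Real.exp (q * l + l ^ 2 / 8) := by rw [← Real.exp_add]; ring_nf


variable {S : Type*} [Fintype S] [DecidableEq S]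

lemma chernoff_subset (P : S → ℝ) (hP0 : ∀ y, 0 ≤ P y) (hP1 : ∑ y, P y = 1)
    (n : ℕ) (A : Finset S) (t : ℝ) (ht : 0 ≤ t) :
    ∑ ω : Fin n → S,
      (if (n : ℝ) * ((∑ y ∈ A, P y) + t) ≤ ((Finset.univ.filter (fun i => ω i ∈ A)).card : ℝ)
        then ∏ i, P (ω i) else 0) ≤ Real.exp (-2 * n * t ^ 2) := by
  set q := ∑ y ∈ A, P y with hq
  have hq0 : 0 ≤ q := Finset.sum_nonneg fun y _ => hP0 y
  have hq1 : q ≤ 1 := by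
    rw [← hP1]
    exact Finset.sum_le_sum_of_subset_of_nonneg (Finset.subset_univ A) fun y _ _ => hP0 y
  set l := 4 * t with hl
  have hl0 : 0 ≤ l := by positivity
  set X : (Fin n → S) → ℝ := fun ω => ((Finset.univ.filter (fun i => ω i ∈ A)).card : ℝ) with hX
  -- pointwise bound
  have point : ∀ ω : Fin n → S,
      (if (n : ℝ) * (q + t) ≤ X ω then ∏ i, P (ω i) else 0)
        ≤ Real.exp (l * (X ω - n * (q + t))) * ∏ i, P (ω i) := by
    intro ω
    have hprod : 0 ≤ ∏ i, P (ω i) := Finset.prod_nonneg fun i _ => hP0 (ω i)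
    split_ifs with h
    · have h1 : (1 : ℝ) ≤ Real.exp (l * (X ω - n * (q + t))) := by
        rw [← Real.exp_zero]
        exact Real.exp_le_exp.mpr (by nlinarith)
      nlinarith
    · positivity
  -- factorization
  have factor : ∀ ω : Fin n → S,
      Real.exp (l * (X ω - n * (q + t))) * ∏ i, P (ω i)
        = Real.exp (-(l * (n * (q + t))))
            * ∏ i, (P (ω i) * Real.exp (if ω i ∈ A then l else 0)) := by
    intro ω
    have hcard : X ω = ∑ i : Fin n, (if ω i ∈ A then (1 : ℝ) else 0) := by
      show ((Finset.univ.filter (fun i => ω i ∈ A)).card : ℝ) = _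
      rw [Finset.card_filter]
      push_cast
      rfl
    have hsum : ∑ i : Fin n, (if ω i ∈ A then l else 0) = l * X ω := by
      rw [hcard, Finset.mul_sum]
      exact Finset.sum_congr rfl fun i _ => by split_ifs <;> simp
    have hsplit : Real.exp (l * (X ω - n * (q + t)))
        = Real.exp (-(l * (n * (q + t)))) * Real.exp (l * X ω) := by
      rw [← Real.exp_add]; congr 1; ring
    rw [Finset.prod_mul_distrib, ← Real.exp_sum, hsum, hsplit]
    ring
  calc ∑ ω : Fin n → S,
        (if (n : ℝ) * (q + t) ≤ X ω then ∏ i, P (ω i) else 0)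
      ≤ ∑ ω : Fin n → S, Real.exp (l * (X ω - n * (q + t))) * ∏ i, P (ω i) :=
        Finset.sum_le_sum fun ω _ => point ω
    _ = Real.exp (-(l * (n * (q + t))))
          * ∑ ω : Fin n → S, ∏ i, (P (ω i) * Real.exp (if ω i ∈ A then l else 0)) := by
        rw [Finset.mul_sum]
        exact Finset.sum_congr rfl fun ω _ => factor ω
    _ = Real.exp (-(l * (n * (q + t))))
          * (∑ y, P y * Real.exp (if y ∈ A then l else 0)) ^ n := by
        congr 1
        rw [← Fintype.prod_sum (κ := fun _ : Fin n => S)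
          (f := fun _ y => P y * Real.exp (if y ∈ A then l else 0))]
        rw [Finset.prod_const, Finset.card_univ, Fintype.card_fin]
    _ ≤ Real.exp (-(l * (n * (q + t)))) * Real.exp (q * l + l ^ 2 / 8) ^ n := by
        apply mul_le_mul_of_nonneg_left _ (Real.exp_pos _).le
        apply pow_le_pow_left₀ _ _ n
        · apply Finset.sum_nonneg
          intro y _
          exact mul_nonneg (hP0 y) (Real.exp_pos _).le
        · have hsplit : ∑ y, P y * Real.exp (if y ∈ A then l else 0)
              = 1 - q + q * Real.exp l := by
            rw [← Finset.sum_add_sum_compl A (fun y => P y * Real.exp (if y ∈ A then l else 0))]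
            have h1 : ∑ y ∈ A, P y * Real.exp (if y ∈ A then l else 0)
                = q * Real.exp l := by
              rw [hq, Finset.sum_mul]
              exact Finset.sum_congr rfl fun y hy => by rw [if_pos hy]
            have h2 : ∑ y ∈ Aᶜ, P y * Real.exp (if y ∈ A then l else 0)
                = 1 - q := by
              have : ∑ y ∈ Aᶜ, P y * Real.exp (if y ∈ A then l else 0) = ∑ y ∈ Aᶜ, P y := by
                apply Finset.sum_congr rfl
                intro y hy
                rw [if_neg (by simpa using hy), Real.exp_zero, mul_one]
              rw [this]
              have := Finset.sum_add_sum_compl A P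
              rw [hP1] at this
              linarith
            rw [h1, h2]; ring
          rw [hsplit]
          exact hoeffding_bernoulli hq0 hq1 l
    _ = Real.exp (-2 * n * t ^ 2) := by
        rw [← Real.exp_nat_mul, ← Real.exp_add]
        congr 1
        rw [hl]; ring

end Weissman

/-- Weissman et al.'s ℓ₁ concentration of the empirical distribution.
The samples are modeled by `ω : Fin n → S`, drawn i.i.d. from `P`, so the probability of an
event is the sum of `∏ i, P (ω i)` over the outcomes `ω` in the event. With probability at
least `1 − δ`, `‖P̂ − P‖₁ ≤ √(2·S·ln(2/δ)/n)` where `P̂ y = #{i : ω i = y}/n`. -/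
theorem weissman_l1_concentration {S : Type*} [Fintype S] [DecidableEq S]
    (P : S → ℝ) (hP0 : ∀ y, 0 ≤ P y) (hP1 : ∑ y, P y = 1)
    (n : ℕ) (hn : 0 < n) (δ : ℝ) (hδ0 : 0 < δ) (hδ1 : δ < 1) :
    1 - δ ≤ ∑ ω : Fin n → S,
      (if ∑ y, |((Finset.univ.filter (fun i => ω i = y)).card : ℝ) / n - P y|
            ≤ Real.sqrt (2 * (Fintype.card S : ℝ) * Real.log (2 / δ) / n)
        then ∏ i, P (ω i) else 0) := by
  have hSne : Nonempty S := by
    by_contra h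
    rw [not_nonempty_iff] at h
    rw [Finset.univ_eq_empty, Finset.sum_empty] at hP1
    norm_num at hP1
  have hScard : 1 ≤ Fintype.card S := Fintype.card_pos_iff.mpr hSne
  set L := Real.log (2 / δ) with hLdef
  have hL0 : 0 ≤ L := Real.log_nonneg (by rw [le_div_iff₀ hδ0]; linarith)
  set ε := Real.sqrt (2 * (Fintype.card S : ℝ) * L / n) with hεdef
  have hε0 : 0 ≤ ε := Real.sqrt_nonneg _
  have hε2 : ε ^ 2 = 2 * (Fintype.card S : ℝ) * L / n := Real.sq_sqrt (by positivity)
  set t := ε / 2 with htdef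
  have ht0 : 0 ≤ t := by positivity
  -- counting lemmas
  have hcount : ∀ ω : Fin n → S,
      ∑ y, (((Finset.univ.filter (fun i => ω i = y)).card : ℝ)) = n := by
    intro ω
    have := Finset.card_eq_sum_card_fiberwise
      (f := ω) (s := (Finset.univ : Finset (Fin n))) (t := Finset.univ)
      (fun x _ => Finset.mem_univ _)
    rw [Finset.card_univ, Fintype.card_fin] at this
    exact_mod_cast this.symm
  have hfiber : ∀ (ω : Fin n → S) (A : Finset S),
      ((Finset.univ.filter (fun i => ω i ∈ A)).card : ℝ)
        = ∑ y ∈ A, ((Finset.univ.filter (fun i => ω i = y)).card : ℝ) := by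
    intro ω A
    have h1 := Finset.card_eq_sum_card_fiberwise
      (f := ω) (s := Finset.univ.filter (fun i => ω i ∈ A)) (t := A)
      (fun x hx => (Finset.mem_filter.mp hx).2)
    have h2 : ∀ y ∈ A, ((Finset.univ.filter (fun i => ω i ∈ A)).filter (fun i => ω i = y))
        = Finset.univ.filter (fun i => ω i = y) := by
      intro y hy
      rw [Finset.filter_filter]
      apply Finset.filter_congr
      intro i _
      constructor
      · intro h; exact h.2
      · intro h; exact ⟨h ▸ hy, h⟩
    have h3 : (Finset.univ.filter (fun i => ω i ∈ A)).card
        = ∑ y ∈ A, (Finset.univ.filter (fun i => ω i = y)).card := by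
      rw [h1]
      exact Finset.sum_congr rfl fun y hy => congrArg Finset.card (h2 y hy)
    exact_mod_cast h3
  -- total mass one
  have htot : ∑ ω : Fin n → S, ∏ i, P (ω i) = 1 := by
    rw [← Fintype.prod_sum (f := fun (_ : Fin n) y => P y)]
    simp [hP1]
  -- split of the sum
  have hsplit : (∑ ω : Fin n → S,
        (if ∑ y, |((Finset.univ.filter (fun i => ω i = y)).card : ℝ) / n - P y| ≤ ε
          then ∏ i, P (ω i) else 0))
      + (∑ ω : Fin n → S,
        (if ∑ y, |((Finset.univ.filter (fun i => ω i = y)).card : ℝ) / n - P y| ≤ ε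
          then 0 else ∏ i, P (ω i))) = 1 := by
    rw [← Finset.sum_add_distrib, ← htot]
    exact Finset.sum_congr rfl fun ω _ => by split_ifs <;> ring
  -- union bound pointwise
  have hpoint : ∀ ω : Fin n → S,
      (if ∑ y, |((Finset.univ.filter (fun i => ω i = y)).card : ℝ) / n - P y| ≤ ε
        then 0 else ∏ i, P (ω i))
      ≤ ∑ A : Finset S,
          (if (n : ℝ) * ((∑ y ∈ A, P y) + t) ≤ ((Finset.univ.filter (fun i => ω i ∈ A)).card : ℝ)
            then ∏ i, P (ω i) else 0) := by
    intro ω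
    have hprod : 0 ≤ ∏ i, P (ω i) := Finset.prod_nonneg fun i _ => hP0 (ω i)
    split_ifs with h
    · exact Finset.sum_nonneg fun A _ => by positivity
    · push_neg at h
      set c : S → ℝ := fun y => ((Finset.univ.filter (fun i => ω i = y)).card : ℝ) with hc
      set A₀ : Finset S := Finset.univ.filter (fun y => P y ≤ c y / n) with hA₀
      have hina : (n : ℝ) * ((∑ y ∈ A₀, P y) + t) ≤ ((Finset.univ.filter (fun i => ω i ∈ A₀)).card : ℝ) := by
        have hd0 : ∑ y, (c y / n - P y) = 0 := by
          rw [Finset.sum_sub_distrib, ← Finset.sum_div, hcount ω, hP1]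
          field_simp
          norm_num
        have habs : ∑ y, |c y / n - P y| = 2 * ∑ y ∈ A₀, (c y / n - P y) := by
          rw [← Finset.sum_add_sum_compl A₀ (fun y => |c y / n - P y|)]
          have e1 : ∑ y ∈ A₀, |c y / n - P y| = ∑ y ∈ A₀, (c y / n - P y) := by
            apply Finset.sum_congr rfl
            intro y hy
            rw [abs_of_nonneg]
            have := (Finset.mem_filter.mp hy).2
            linarith
          have e2 : ∑ y ∈ A₀ᶜ, |c y / n - P y| = ∑ y ∈ A₀ᶜ, -(c y / n - P y) := by
            apply Finset.sum_congr rfl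
            intro y hy
            rw [abs_of_nonpos]
            have hy' : ¬ (P y ≤ c y / n) := by
              have := Finset.mem_compl.mp hy
              simpa [hA₀] using this
            linarith [lt_of_not_ge hy']
          have e3 : ∑ y ∈ A₀ᶜ, (c y / n - P y) = - ∑ y ∈ A₀, (c y / n - P y) := by
            have := Finset.sum_add_sum_compl A₀ (fun y => c y / n - P y)
            rw [hd0] at this
            linarith
          rw [e1, e2, Finset.sum_neg_distrib, e3]
          ring
        have hAsum : t < ∑ y ∈ A₀, (c y / n - P y) := by
          rw [habs] at h
          linarith
        have hc' : ((Finset.univ.filter (fun i => ω i ∈ A₀)).card : ℝ) = ∑ y ∈ A₀, c y :=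
          hfiber ω A₀
        rw [hc']
        have hnpos : (0 : ℝ) < n := by exact_mod_cast hn
        rw [Finset.sum_sub_distrib] at hAsum
        have : ∑ y ∈ A₀, c y / n = (∑ y ∈ A₀, c y) / n := by rw [Finset.sum_div]
        rw [this] at hAsum
        rw [mul_comm, ← le_div_iff₀ hnpos]
        linarith
      calc ∏ i, P (ω i)
          = (if (n : ℝ) * ((∑ y ∈ A₀, P y) + t) ≤ ((Finset.univ.filter (fun i => ω i ∈ A₀)).card : ℝ)
              then ∏ i, P (ω i) else 0) := by rw [if_pos hina]
        _ ≤ _ := Finset.single_le_sum (f := fun A : Finset S =>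
              (if (n : ℝ) * ((∑ y ∈ A, P y) + t) ≤ ((Finset.univ.filter (fun i => ω i ∈ A)).card : ℝ)
                then ∏ i, P (ω i) else 0))
              (fun A _ => by positivity) (Finset.mem_univ A₀)
  -- bound bad mass
  have hbad : (∑ ω : Fin n → S,
      (if ∑ y, |((Finset.univ.filter (fun i => ω i = y)).card : ℝ) / n - P y| ≤ ε
        then 0 else ∏ i, P (ω i))) ≤ δ := by
    calc (∑ ω : Fin n → S,
        (if ∑ y, |((Finset.univ.filter (fun i => ω i = y)).card : ℝ) / n - P y| ≤ ε
          then 0 else ∏ i, P (ω i)))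
        ≤ ∑ ω : Fin n → S, ∑ A : Finset S,
            (if (n : ℝ) * ((∑ y ∈ A, P y) + t)
                ≤ ((Finset.univ.filter (fun i => ω i ∈ A)).card : ℝ)
              then ∏ i, P (ω i) else 0) :=
          Finset.sum_le_sum fun ω _ => hpoint ω
      _ = ∑ A : Finset S, ∑ ω : Fin n → S,
            (if (n : ℝ) * ((∑ y ∈ A, P y) + t)
                ≤ ((Finset.univ.filter (fun i => ω i ∈ A)).card : ℝ)
              then ∏ i, P (ω i) else 0) := Finset.sum_comm
      _ ≤ ∑ _A : Finset S, Real.exp (-2 * n * t ^ 2) :=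
          Finset.sum_le_sum fun A _ => chernoff_subset P hP0 hP1 n A t ht0
      _ = (2 ^ Fintype.card S : ℝ) * Real.exp (-2 * n * t ^ 2) := by
          rw [Finset.sum_const, Finset.card_univ, Fintype.card_finset, nsmul_eq_mul]
          push_cast
          ring
      _ ≤ δ := by
          have hnne : (n : ℝ) ≠ 0 := by positivity
          have hexp : -2 * n * t ^ 2 = -((Fintype.card S : ℝ) * L) := by
            rw [htdef]
            have : (ε / 2) ^ 2 = ε ^ 2 / 4 := by ring
            rw [this, hε2]
            field_simp
            ring
          rw [hexp]
          have h2δ : Real.exp L = 2 / δ := by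
            rw [hLdef]; exact Real.exp_log (by positivity)
          have : Real.exp (-((Fintype.card S : ℝ) * L)) = (δ / 2) ^ Fintype.card S := by
            rw [Real.exp_neg, Real.exp_nat_mul, h2δ, ← inv_pow, inv_div]
          rw [this, ← mul_pow]
          have h2 : (2 : ℝ) * (δ / 2) = δ := by ring
          rw [h2]
          calc δ ^ Fintype.card S ≤ δ ^ 1 :=
              pow_le_pow_of_le_one hδ0.le hδ1.le hScard
            _ = δ := pow_one δ
  linarith [hsplit, hbad]
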